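/- Let z ∈ ℝⁿ be sorted in ascending order with all zᵢ > 0, let θ > 0, fix k with 1 ≤ k < n, set b_k = z₁ + … + z_k and λ* = (θ b_k + √(θ² b_k² + 4k))/(2k). If θ z_k < λ* ≤ θ z_{k+1}, then the vector w* with w*ᵢ = max(0, λ* − θ zᵢ) satisfies ⟨w*, 1⟩ = 1/λ* and has exactly k strictly positive entries. -/

import Mathlib

theorem stmt_3 (n : ℕ) (z : ℕ → ℝ)
    (hpos : ∀ i, 1 ≤ i → i ≤ n → 0 < z i)
    (hsort : ∀ i, 1 ≤ i → i < n → z i ≤ z (i + 1))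
    (θ : ℝ) (hθ : 0 < θ)
    (k : ℕ) (hk1 : 1 ≤ k) (hkn : k < n)
    (b lam : ℝ)
    (hb : b = ∑ i ∈ Finset.Icc 1 k, z i)
    (hlam : lam = (θ * b + Real.sqrt (θ ^ 2 * b ^ 2 + 4 * k)) / (2 * k))
    (hlow : θ * z k < lam) (hup : lam ≤ θ * z (k + 1))
    (w : ℕ → ℝ) (hw : ∀ i, w i = max 0 (lam - θ * z i)) :
    (∑ i ∈ Finset.Icc 1 n, w i) = 1 / lam ∧
    ((Finset.Icc 1 n).filter (fun i => 0 < w i)).card = k := by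
  -- monotonicity on [1, n]
  have zmono : ∀ i j, 1 ≤ i → i ≤ j → j ≤ n → z i ≤ z j := by
    intro i j hi hij hjn
    induction j with
    | zero => omega
    | succ m ih =>
      rcases Nat.eq_or_lt_of_le hij with h | h
      · rw [h]
      · have hm : i ≤ m := Nat.lt_succ_iff.mp h
        have h1m : 1 ≤ m := le_trans hi hm
        have := hsort m h1m (by omega)
        exact le_trans (ih hm (by omega)) this
  have hlampos : 0 < lam :=
    lt_trans (mul_pos hθ (hpos k hk1 (le_of_lt hkn))) hlow
  -- w values
  have hwk : ∀ i, 1 ≤ i → i ≤ k → w i = lam - θ * z i := by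
    intro i hi hik
    have : θ * z i ≤ θ * z k :=
      mul_le_mul_of_nonneg_left (zmono i k hi hik (le_of_lt hkn)) (le_of_lt hθ)
    rw [hw i, max_eq_right (by linarith)]
  have hwzero : ∀ i, k + 1 ≤ i → i ≤ n → w i = 0 := by
    intro i hi hin
    have : θ * z (k + 1) ≤ θ * z i :=
      mul_le_mul_of_nonneg_left (zmono (k+1) i (by omega) hi hin) (le_of_lt hθ)
    rw [hw i, max_eq_left (by linarith)]
  -- quadratic identity: k * lam - θ * b = 1 / lam
  have hk0 : (0:ℝ) < (k:ℝ) := by exact_mod_cast hk1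
  have hDnn : (0:ℝ) ≤ θ ^ 2 * b ^ 2 + 4 * k := by positivity
  have hsq : Real.sqrt (θ ^ 2 * b ^ 2 + 4 * k) = 2 * k * lam - θ * b := by
    field_simp at hlam
    linarith [hlam]
  have hD : θ ^ 2 * b ^ 2 + 4 * k = (2 * k * lam - θ * b)^2 := by
    rw [← hsq, Real.sq_sqrt hDnn]
  have hquad : (k:ℝ) * lam ^ 2 - θ * b * lam - 1 = 0 := by nlinarith [hD]
  have hkey : (k:ℝ) * lam - θ * b = 1 / lam := by
    field_simp
    nlinarith [hquad]
  -- sum splitting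
  have hsplit : (∑ i ∈ Finset.Icc 1 n, w i)
      = (∑ i ∈ Finset.Icc 1 k, w i) + ∑ i ∈ Finset.Icc (k+1) n, w i := by
    have hIoc : ∀ m : ℕ, Finset.Icc 1 m = Finset.Ioc 0 m := fun m => by
      rw [← Finset.Icc_add_one_left_eq_Ioc]; rfl
    rw [hIoc, hIoc, Finset.Icc_add_one_left_eq_Ioc]
    exact (Finset.sum_Ioc_consecutive _ (Nat.zero_le k) (le_of_lt hkn)).symm
  have hsum2 : (∑ i ∈ Finset.Icc (k+1) n, w i) = 0 := by
    apply Finset.sum_eq_zero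
    intro i hi
    rw [Finset.mem_Icc] at hi
    exact hwzero i hi.1 hi.2
  have hsum1 : (∑ i ∈ Finset.Icc 1 k, w i) = (k:ℝ) * lam - θ * b := by
    have hc : (∑ i ∈ Finset.Icc 1 k, w i) = ∑ i ∈ Finset.Icc 1 k, (lam - θ * z i) :=
      Finset.sum_congr rfl (fun i hi =>
        hwk i (Finset.mem_Icc.mp hi).1 (Finset.mem_Icc.mp hi).2)
    rw [hc, Finset.sum_sub_distrib, Finset.sum_const, ← Finset.mul_sum, hb]
    simp [Nat.card_Icc, mul_comm]
  constructor
  · rw [hsplit, hsum1, hsum2, hkey]; ring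
  · have hfilter : (Finset.Icc 1 n).filter (fun i => 0 < w i) = Finset.Icc 1 k := by
      ext i
      simp only [Finset.mem_filter, Finset.mem_Icc]
      constructor
      · rintro ⟨⟨h1, h2⟩, hpos'⟩
        refine ⟨h1, ?_⟩
        by_contra h
        rw [hwzero i (by omega) h2] at hpos'
        exact lt_irrefl 0 hpos'
      · rintro ⟨h1, h2⟩
        refine ⟨⟨h1, le_trans h2 (le_of_lt hkn)⟩, ?_⟩
        rw [hwk i h1 h2]
        have : θ * z i ≤ θ * z k :=
          mul_le_mul_of_nonneg_left (zmono i k h1 h2 (le_of_lt hkn)) (le_of_lt hθ)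
        linarith
    rw [hfilter, Nat.card_Icc]
    omega
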